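/- Fix x ∈ X, assume the map s ↦ σ_s(x) is finite-to-one, and let γ be a character of S. With W : ℓ²(S(x)) → H_0^⊥ the unitary determined by W ξ_{σ_u(x)} = Q^⊥ ξ_u / ‖Q^⊥ ξ_u‖, and μ_x the left regular orbit cocycle, one has W* Q^⊥ π_{x,γ}(S_t) W = ρ_{x, γμ_x}(S_t) for all t ∈ S and W* Q^⊥ π_{x,γ}(f) W = ρ_{x, γμ_x}(f) for all f ∈ C(X). Consequently, for every finite set I ⊆ S and functions f_s ∈ C(X) (s ∈ I), ‖∑_{s∈I} ρ_{x,γμ_x}(S_s) ρ_{x,γμ_x}(f_s)‖ ≤ ‖∑_{s∈I} π_{x,γ}(S_s) π_{x,γ}(f_s)‖. -/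

import Mathlib

set_option maxHeartbeats 1000000

private theorem lp_clm_ext' {ι : Type} [DecidableEq ι] {V : Type*} [NormedAddCommGroup V]
    [NormedSpace ℂ V] (A B : lp (fun _ : ι => ℂ) 2 →L[ℂ] V)
    (h : ∀ i : ι, A (lp.single 2 i 1) = B (lp.single 2 i 1)) : A = B := by
  haveI : Fact ((1:ENNReal) ≤ 2) := ⟨one_le_two⟩
  ext f
  have hf : HasSum (fun i : ι => lp.single 2 i (f i)) f := lp.hasSum_single (by norm_num) f
  have key : ∀ (c : ℂ) (i : ι), A (lp.single 2 i c) = B (lp.single 2 i c) := by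
    intro c i
    have h1 : lp.single (E := fun _ : ι => ℂ) 2 i c = c • lp.single 2 i (1 : ℂ) := by
      rw [← lp.single_smul, smul_eq_mul, mul_one]
    rw [h1, map_smul, map_smul, h i]
  have hA := hf.mapL A
  have hB := hf.mapL B
  have hB' : HasSum (fun i : ι => A (lp.single 2 i (f i))) (B f) := by
    simpa only [key] using hB
  exact hA.unique hB'


/-- `W* Q^⊥ π_{x,γ}(S_t) W = ρ_{x,γμ_x}(S_t)` and
`W* Q^⊥ π_{x,γ}(f) W = ρ_{x,γμ_x}(f)`; consequently the norm of any finite sum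
`∑ ρ(S_s)ρ(f_s)` is dominated by the norm of `∑ π(S_s)π(f_s)`. -/
theorem orbit_rep_compression_of_left_regular
    {S : Type} [AddCancelCommMonoid S] [Countable S] [DecidableEq S]
    {X : Type} [MetricSpace X] [CompactSpace X] [Nonempty X] [DecidableEq X]
    (σ : S → C(X, X))
    (hσ0 : σ 0 = ContinuousMap.id X)
    (hσadd : ∀ s t : S, σ (s + t) = (σ s).comp (σ t))
    (hσsurj : ∀ s : S, Function.Surjective (σ s))
    (x : X)
    (hfin : ∀ y : X, {s : S | (σ s) x = y}.Finite)
    -- a character of S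
    (γ : S → ℂ)
    (hγ0 : γ 0 = 1) (hγadd : ∀ s t : S, γ (s + t) = γ s * γ t)
    (hγabs : ∀ s : S, ‖γ s‖ = 1)
    -- the action of S on the orbit S(x)
    (στ : S → {y : X // ∃ s : S, (σ s) x = y} → {y : X // ∃ s : S, (σ s) x = y})
    (hστ : ∀ (t : S) (y : {y : X // ∃ s : S, (σ s) x = y}), (στ t y : X) = (σ t) (y : X))
    -- Q is the orthogonal projection of ℓ²(S) onto H₀
    (Q : lp (fun _ : S => ℂ) 2 →L[ℂ] lp (fun _ : S => ℂ) 2)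
    (hQmem : ∀ η : lp (fun _ : S => ℂ) 2,
      Q η ∈ (Submodule.span ℂ {v : lp (fun _ : S => ℂ) 2 | ∃ s t : S,
        (σ s) x = (σ t) x ∧ v = lp.single 2 s (1 : ℂ) - lp.single 2 t (1 : ℂ)}).topologicalClosure)
    (hQfix : ∀ η ∈ (Submodule.span ℂ {v : lp (fun _ : S => ℂ) 2 | ∃ s t : S,
        (σ s) x = (σ t) x ∧ v = lp.single 2 s (1 : ℂ) - lp.single 2 t (1 : ℂ)}).topologicalClosure,
      Q η = η)
    (hQorth : ∀ (η : lp (fun _ : S => ℂ) 2),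
      ∀ v ∈ (Submodule.span ℂ {v : lp (fun _ : S => ℂ) 2 | ∃ s t : S,
        (σ s) x = (σ t) x ∧ v = lp.single 2 s (1 : ℂ) - lp.single 2 t (1 : ℂ)}).topologicalClosure,
      inner ℂ (η - Q η) v = (0 : ℂ))
    -- the left regular orbit cocycle
    (μx : S → {y : X // ∃ s : S, (σ s) x = y} → ℝ)
    (hμx : ∀ t u : S,
      μx t ⟨(σ u) x, ⟨u, rfl⟩⟩ =
        ‖lp.single 2 (t + u) (1 : ℂ) - Q (lp.single 2 (t + u) (1 : ℂ))‖ /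
          ‖lp.single 2 u (1 : ℂ) - Q (lp.single 2 u (1 : ℂ))‖)
    -- the unitary W : ℓ²(S(x)) → H₀^⊥, viewed as an isometry into ℓ²(S)
    (W : lp (fun _ : {y : X // ∃ s : S, (σ s) x = y} => ℂ) 2 →L[ℂ] lp (fun _ : S => ℂ) 2)
    (hWiso : ∀ η, ‖W η‖ = ‖η‖)
    (hW : ∀ u : S,
      W (lp.single 2 (⟨(σ u) x, ⟨u, rfl⟩⟩ : {y : X // ∃ s : S, (σ s) x = y}) (1 : ℂ)) =
        ‖lp.single 2 u (1 : ℂ) - Q (lp.single 2 u (1 : ℂ))‖⁻¹ •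
          (lp.single 2 u (1 : ℂ) - Q (lp.single 2 u (1 : ℂ))))
    -- the left regular representation π_{x,γ}
    (πf : C(X, ℂ) → (lp (fun _ : S => ℂ) 2 →L[ℂ] lp (fun _ : S => ℂ) 2))
    (πS : S → (lp (fun _ : S => ℂ) 2 →L[ℂ] lp (fun _ : S => ℂ) 2))
    (hπf : ∀ (f : C(X, ℂ)) (η : lp (fun _ : S => ℂ) 2) (s : S),
      (πf f η) s = f ((σ s) x) * η s)
    (hπS : ∀ (t s : S), πS t (lp.single 2 s (1 : ℂ)) = γ t • lp.single 2 (t + s) (1 : ℂ))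
    -- the orbit representation ρ_{x,γμ_x}
    (ρf : C(X, ℂ) →
      (lp (fun _ : {y : X // ∃ s : S, (σ s) x = y} => ℂ) 2 →L[ℂ]
        lp (fun _ : {y : X // ∃ s : S, (σ s) x = y} => ℂ) 2))
    (ρS : S →
      (lp (fun _ : {y : X // ∃ s : S, (σ s) x = y} => ℂ) 2 →L[ℂ]
        lp (fun _ : {y : X // ∃ s : S, (σ s) x = y} => ℂ) 2))
    (hρf : ∀ (f : C(X, ℂ)) (η : lp (fun _ : {y : X // ∃ s : S, (σ s) x = y} => ℂ) 2)
      (y : {y : X // ∃ s : S, (σ s) x = y}), (ρf f η) y = f (y : X) * η y)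
    (hρS : ∀ (t : S) (y : {y : X // ∃ s : S, (σ s) x = y}),
      ρS t (lp.single 2 y (1 : ℂ)) = (γ t * (μx t y : ℂ)) • lp.single 2 (στ t y) (1 : ℂ)) :
    -- W* Q^⊥ π(S_t) W = ρ(S_t) and W* Q^⊥ π(f) W = ρ(f)
    (∀ t : S,
      (ContinuousLinearMap.adjoint W).comp
        (((ContinuousLinearMap.id ℂ (lp (fun _ : S => ℂ) 2)) - Q).comp ((πS t).comp W)) = ρS t) ∧
    (∀ f : C(X, ℂ),
      (ContinuousLinearMap.adjoint W).comp
        (((ContinuousLinearMap.id ℂ (lp (fun _ : S => ℂ) 2)) - Q).comp ((πf f).comp W)) = ρf f) ∧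
    -- the norm inequality
    (∀ (I : Finset S) (f : S → C(X, ℂ)),
      ‖∑ s ∈ I, (ρS s).comp (ρf (f s))‖ ≤ ‖∑ s ∈ I, (πS s).comp (πf (f s))‖) := by
  classical
  set M := (Submodule.span ℂ {v : lp (fun _ : S => ℂ) 2 | ∃ s t : S,
      (σ s) x = (σ t) x ∧ v = lp.single 2 s (1 : ℂ) - lp.single 2 t (1 : ℂ)}).topologicalClosure
    with hMdef
  -- real scalars act as complex scalars
  have hrc : ∀ (r : ℝ) (v : lp (fun _ : S => ℂ) 2), r • v = (r : ℂ) • v := by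
    intro r v
    rw [← algebraMap_smul ℂ r v, Complex.coe_algebraMap]
  have hrcY : ∀ (r : ℝ) (v : lp (fun _ : {y : X // ∃ s : S, (σ s) x = y} => ℂ) 2),
      r • v = (r : ℂ) • v := by
    intro r v
    rw [← algebraMap_smul ℂ r v, Complex.coe_algebraMap]
  -- generators belong to M
  have hgenM : ∀ s t : S, (σ s) x = (σ t) x →
      lp.single 2 s (1 : ℂ) - lp.single 2 t (1 : ℂ) ∈ M :=
    fun s t h => Submodule.le_topologicalClosure _ (Submodule.subset_span ⟨s, t, h, rfl⟩)
  -- a continuous linear map preserving the generators preserves M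
  have hMmap : ∀ (A : lp (fun _ : S => ℂ) 2 →L[ℂ] lp (fun _ : S => ℂ) 2),
      (∀ s t : S, (σ s) x = (σ t) x →
        A (lp.single 2 s (1 : ℂ) - lp.single 2 t (1 : ℂ)) ∈ M) →
      ∀ m ∈ M, A m ∈ M := by
    intro A hA m hm
    have hle : (Submodule.span ℂ {v : lp (fun _ : S => ℂ) 2 | ∃ s t : S,
        (σ s) x = (σ t) x ∧ v = lp.single 2 s (1 : ℂ) - lp.single 2 t (1 : ℂ)}).topologicalClosure
        ≤ Submodule.comap (A : lp (fun _ : S => ℂ) 2 →ₗ[ℂ] lp (fun _ : S => ℂ) 2) M := by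
      apply Submodule.topologicalClosure_minimal
      · rw [Submodule.span_le]
        rintro v ⟨s, t, hst, rfl⟩
        exact hA s t hst
      · exact (Submodule.isClosed_topologicalClosure _).preimage A.continuous
    exact hle (hMdef ▸ hm)
  -- the projection complement is contractive
  have hPnorm : ∀ η : lp (fun _ : S => ℂ) 2, ‖η - Q η‖ ≤ ‖η‖ := by
    intro η
    have h0 : inner (𝕜 := ℂ) (η - Q η) (Q η) = 0 := hQorth η (Q η) (hQmem η)
    have hpyth := norm_add_sq_eq_norm_sq_add_norm_sq_of_inner_eq_zero (η - Q η) (Q η) h0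
    rw [sub_add_cancel] at hpyth
    nlinarith [norm_nonneg (η - Q η), norm_nonneg (Q η), norm_nonneg η, sq_nonneg ‖Q η‖]
  -- coordinates of basis vectors
  have hsingle_co : ∀ (u s' : S), (↑(lp.single 2 u (1:ℂ)) : ∀ _ : S, ℂ) s'
      = if s' = u then (1:ℂ) else 0 := by
    intro u s'
    by_cases h : s' = u
    · subst h; rw [lp.single_apply_self, if_pos rfl]
    · rw [lp.single_apply_ne _ _ _ h, if_neg h]
  -- elements of M have zero coordinate-sum over each fibre
  have hcoordM : ∀ (y : X) (v : lp (fun _ : S => ℂ) 2), v ∈ M →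
      ∑ s ∈ (hfin y).toFinset, v s = 0 := by
    intro y v hv
    set L : lp (fun _ : S => ℂ) 2 →L[ℂ] ℂ :=
      ∑ s ∈ (hfin y).toFinset, innerSL ℂ (lp.single 2 s (1 : ℂ)) with hL
    have hLapp : ∀ w : lp (fun _ : S => ℂ) 2, L w = ∑ s ∈ (hfin y).toFinset, w s := by
      intro w
      rw [hL, ContinuousLinearMap.sum_apply]
      refine Finset.sum_congr rfl fun s _ => ?_
      simp [lp.inner_single_left]
    have hker : M ≤ LinearMap.ker (L : lp (fun _ : S => ℂ) 2 →ₗ[ℂ] ℂ) := by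
      rw [hMdef]
      apply Submodule.topologicalClosure_minimal
      · rw [Submodule.span_le]
        rintro w ⟨s, t, hst, rfl⟩
        have hmem : s ∈ (hfin y).toFinset ↔ t ∈ (hfin y).toFinset := by
          simp only [Set.Finite.mem_toFinset, Set.mem_setOf_eq, hst]
        simp only [SetLike.mem_coe, LinearMap.mem_ker, ContinuousLinearMap.coe_coe]
        rw [hLapp]
        have hco : ∀ s' : S,
            (↑((lp.single 2 s (1:ℂ) - lp.single 2 t (1:ℂ)) : lp (fun _ : S => ℂ) 2) : ∀ _ : S, ℂ) s'
            = (if s' = s then (1:ℂ) else 0) - (if s' = t then (1:ℂ) else 0) := by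
          intro s'
          rw [lp.coeFn_sub, Pi.sub_apply, hsingle_co, hsingle_co]
        simp only [hco]
        rw [Finset.sum_sub_distrib,
          Finset.sum_ite_eq' ((hfin y).toFinset) s (fun _ => (1:ℂ)),
          Finset.sum_ite_eq' ((hfin y).toFinset) t (fun _ => (1:ℂ))]
        by_cases hs : s ∈ (hfin y).toFinset
        · rw [if_pos hs, if_pos (hmem.mp hs), sub_self]
        · rw [if_neg hs, if_neg (fun ht => hs (hmem.mpr ht)), sub_self]
      · exact ContinuousLinearMap.isClosed_ker L
    have hv0 : L v = 0 := by
      have h' := hker hv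
      simpa using h'
    rw [← hLapp]
    exact hv0
  -- Q^⊥ does not kill basis vectors
  have hne : ∀ u : S, lp.single 2 u (1 : ℂ) - Q (lp.single 2 u (1 : ℂ)) ≠ 0 := by
    intro u h
    have heq : lp.single 2 u (1 : ℂ) = Q (lp.single 2 u (1 : ℂ)) := by
      rwa [sub_eq_zero] at h
    have hmem : lp.single 2 u (1 : ℂ) ∈ M := heq ▸ hQmem (lp.single 2 u (1 : ℂ))
    have hzero := hcoordM ((σ u) x) _ hmem
    have hone : ∑ s ∈ (hfin ((σ u) x)).toFinset,
        (↑(lp.single 2 u (1:ℂ)) : ∀ _ : S, ℂ) s = 1 := by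
      simp only [hsingle_co]
      rw [Finset.sum_ite_eq' ((hfin ((σ u) x)).toFinset) u (fun _ => (1:ℂ))]
      rw [if_pos]
      simp [Set.Finite.mem_toFinset]
    rw [hzero] at hone
    exact zero_ne_one hone
  have hnorm_ne : ∀ u : S, (‖lp.single 2 u (1 : ℂ) - Q (lp.single 2 u (1 : ℂ))‖ : ℝ) ≠ 0 :=
    fun u => norm_ne_zero_iff.mpr (hne u)
  -- W^* W = 1
  have hWW : ∀ η, ContinuousLinearMap.adjoint W (W η) = η := by
    intro η
    refine ext_inner_right ℂ fun ζ => ?_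
    rw [ContinuousLinearMap.adjoint_inner_left]
    exact LinearIsometry.inner_map_map
      (⟨W.toLinearMap, hWiso⟩ : lp (fun _ : {y : X // ∃ s : S, (σ s) x = y} => ℂ) 2 →ₗᵢ[ℂ]
        lp (fun _ : S => ℂ) 2) η ζ
  -- W^* on the vectors Q^⊥ ξ_u
  have hWstar : ∀ u : S,
      ContinuousLinearMap.adjoint W (lp.single 2 u (1 : ℂ) - Q (lp.single 2 u (1 : ℂ))) =
        ((‖lp.single 2 u (1 : ℂ) - Q (lp.single 2 u (1 : ℂ))‖ : ℂ)) •
          lp.single 2 (⟨(σ u) x, ⟨u, rfl⟩⟩ : {y : X // ∃ s : S, (σ s) x = y}) (1 : ℂ) := by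
    intro u
    have h2 : lp.single 2 u (1 : ℂ) - Q (lp.single 2 u (1 : ℂ)) =
        ((‖lp.single 2 u (1 : ℂ) - Q (lp.single 2 u (1 : ℂ))‖ : ℂ)) •
          W (lp.single 2 (⟨(σ u) x, ⟨u, rfl⟩⟩ : {y : X // ∃ s : S, (σ s) x = y}) (1 : ℂ)) := by
      rw [hW u, hrc, smul_smul, Complex.ofReal_inv, mul_inv_cancel₀, one_smul]
      exact_mod_cast Complex.ofReal_ne_zero.mpr (hnorm_ne u)
    have h3 := congrArg (ContinuousLinearMap.adjoint W) h2
    rw [map_smul, hWW] at h3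
    exact h3
  -- the key computation
  have hmain : ∀ (B : lp (fun _ : S => ℂ) 2 →L[ℂ] lp (fun _ : S => ℂ) 2),
      (∀ m ∈ M, B m ∈ M) → ∀ (u w : S) (a : ℂ),
      B (lp.single 2 u (1 : ℂ)) = a • lp.single 2 w (1 : ℂ) →
      ContinuousLinearMap.adjoint W
          ((ContinuousLinearMap.id ℂ (lp (fun _ : S => ℂ) 2) - Q)
            (B (W (lp.single 2 (⟨(σ u) x, ⟨u, rfl⟩⟩ :
              {y : X // ∃ s : S, (σ s) x = y}) (1 : ℂ))))) =
        ((‖lp.single 2 u (1 : ℂ) - Q (lp.single 2 u (1 : ℂ))‖ : ℂ)⁻¹ *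
            (a * (‖lp.single 2 w (1 : ℂ) - Q (lp.single 2 w (1 : ℂ))‖ : ℂ))) •
          lp.single 2 (⟨(σ w) x, ⟨w, rfl⟩⟩ : {y : X // ∃ s : S, (σ s) x = y}) (1 : ℂ) := by
    intro B hBM u w a hBu
    have h1 : B (W (lp.single 2 (⟨(σ u) x, ⟨u, rfl⟩⟩ :
        {y : X // ∃ s : S, (σ s) x = y}) (1 : ℂ))) =
        ((‖lp.single 2 u (1 : ℂ) - Q (lp.single 2 u (1 : ℂ))‖ : ℂ)⁻¹) •
          (a • lp.single 2 w (1 : ℂ) - B (Q (lp.single 2 u (1 : ℂ)))) := by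
      rw [hW u, hrc, map_smul, map_sub, hBu, Complex.ofReal_inv]
    have hmQ : Q (B (Q (lp.single 2 u (1 : ℂ)))) = B (Q (lp.single 2 u (1 : ℂ))) :=
      hQfix _ (hBM _ (hQmem _))
    have h2 : (ContinuousLinearMap.id ℂ (lp (fun _ : S => ℂ) 2) - Q)
        (B (W (lp.single 2 (⟨(σ u) x, ⟨u, rfl⟩⟩ :
          {y : X // ∃ s : S, (σ s) x = y}) (1 : ℂ)))) =
        ((‖lp.single 2 u (1 : ℂ) - Q (lp.single 2 u (1 : ℂ))‖ : ℂ)⁻¹) •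
          (a • (lp.single 2 w (1 : ℂ) - Q (lp.single 2 w (1 : ℂ)))) := by
      rw [h1]
      simp only [ContinuousLinearMap.sub_apply, ContinuousLinearMap.id_apply, map_smul, map_sub,
        hmQ, smul_sub]
      abel
    rw [h2, map_smul, map_smul, hWstar w, smul_smul, smul_smul]
    congr 1
    ring
  -- identify the action on the orbit basis
  have hstep : ∀ (t u : S), στ t (⟨(σ u) x, ⟨u, rfl⟩⟩ : {y : X // ∃ s : S, (σ s) x = y}) =
      (⟨(σ (t + u)) x, ⟨t + u, rfl⟩⟩ : {y : X // ∃ s : S, (σ s) x = y}) := by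
    intro t u
    apply Subtype.ext
    rw [hστ]
    show (σ t) ((σ u) x) = (σ (t + u)) x
    rw [hσadd t u]
    rfl
  -- πS preserves M
  have hπSM : ∀ t : S, ∀ m ∈ M, πS t m ∈ M := by
    intro t
    apply hMmap
    intro s s' hss'
    rw [map_sub, hπS t s, hπS t s', ← smul_sub]
    refine Submodule.smul_mem _ _ (hgenM _ _ ?_)
    rw [hσadd t s, hσadd t s']
    simp [hss']
  -- πf computed on basis vectors
  have hπf_single : ∀ (g : C(X, ℂ)) (u : S),
      πf g (lp.single 2 u (1 : ℂ)) = g ((σ u) x) • lp.single 2 u (1 : ℂ) := by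
    intro g u
    apply lp.ext
    funext s
    rw [lp.coeFn_smul, Pi.smul_apply, hπf]
    by_cases h : s = u
    · subst h; rw [lp.single_apply_self, smul_eq_mul]
    · rw [lp.single_apply_ne _ _ _ h, mul_zero, smul_zero]
  -- πf preserves M
  have hπfM : ∀ g : C(X, ℂ), ∀ m ∈ M, πf g m ∈ M := by
    intro g
    apply hMmap
    intro s s' hss'
    rw [map_sub, hπf_single g s, hπf_single g s', hss', ← smul_sub]
    exact Submodule.smul_mem _ _ (hgenM _ _ hss')
  -- ρf computed on basis vectors
  have hρf_single : ∀ (g : C(X, ℂ)) (y : {y : X // ∃ s : S, (σ s) x = y}),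
      ρf g (lp.single 2 y (1 : ℂ)) = g (y : X) • lp.single 2 y (1 : ℂ) := by
    intro g y
    apply lp.ext
    funext z
    rw [lp.coeFn_smul, Pi.smul_apply, hρf]
    by_cases h : z = y
    · subst h; rw [lp.single_apply_self, smul_eq_mul]
    · rw [lp.single_apply_ne _ _ _ h, mul_zero, smul_zero]
  -- FIRST CLAIM
  have main1 : ∀ t : S,
      (ContinuousLinearMap.adjoint W).comp
        (((ContinuousLinearMap.id ℂ (lp (fun _ : S => ℂ) 2)) - Q).comp ((πS t).comp W)) =
      ρS t := by
    intro t
    apply lp_clm_ext'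
    rintro ⟨yval, u, rfl⟩
    simp only [ContinuousLinearMap.comp_apply]
    rw [hmain (πS t) (hπSM t) u (t + u) (γ t) (hπS t u)]
    rw [hρS t ⟨(σ u) x, ⟨u, rfl⟩⟩, hstep t u, hμx t u]
    congr 1
    push_cast
    ring
  -- SECOND CLAIM
  have main2 : ∀ g : C(X, ℂ),
      (ContinuousLinearMap.adjoint W).comp
        (((ContinuousLinearMap.id ℂ (lp (fun _ : S => ℂ) 2)) - Q).comp ((πf g).comp W)) =
      ρf g := by
    intro g
    apply lp_clm_ext'
    rintro ⟨yval, u, rfl⟩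
    simp only [ContinuousLinearMap.comp_apply]
    rw [hmain (πf g) (hπfM g) u u (g ((σ u) x)) (hπf_single g u)]
    rw [hρf_single g ⟨(σ u) x, ⟨u, rfl⟩⟩]
    have hcu : (‖lp.single 2 u (1:ℂ) - Q (lp.single 2 u (1:ℂ))‖ : ℂ) ≠ 0 :=
      Complex.ofReal_ne_zero.mpr (hnorm_ne u)
    congr 1
    field_simp
  -- THIRD CLAIM : compression of products
  have main3 : ∀ (t : S) (g : C(X, ℂ)),
      (ContinuousLinearMap.adjoint W).comp
        (((ContinuousLinearMap.id ℂ (lp (fun _ : S => ℂ) 2)) - Q).comp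
          (((πS t).comp (πf g)).comp W)) = (ρS t).comp (ρf g) := by
    intro t g
    apply lp_clm_ext'
    rintro ⟨yval, u, rfl⟩
    have hBu : ((πS t).comp (πf g)) (lp.single 2 u (1 : ℂ)) =
        (g ((σ u) x) * γ t) • lp.single 2 (t + u) (1 : ℂ) := by
      rw [ContinuousLinearMap.comp_apply, hπf_single g u, map_smul, hπS t u, smul_smul]
    have hBM : ∀ m ∈ M, ((πS t).comp (πf g)) m ∈ M := by
      intro m hm
      exact hπSM t _ (hπfM g m hm)
    simp only [ContinuousLinearMap.comp_apply]
    rw [← ContinuousLinearMap.comp_apply (πS t) (πf g)]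
    rw [hmain ((πS t).comp (πf g)) hBM u (t + u) (g ((σ u) x) * γ t) hBu]
    rw [hρf_single g ⟨(σ u) x, ⟨u, rfl⟩⟩, map_smul,
      hρS t ⟨(σ u) x, ⟨u, rfl⟩⟩, hstep t u, hμx t u, smul_smul]
    congr 1
    push_cast
    ring
  refine ⟨main1, main2, ?_⟩
  -- the norm inequality
  intro I f
  have hsum : (∑ s ∈ I, (ρS s).comp (ρf (f s))) =
      (ContinuousLinearMap.adjoint W).comp
        (((ContinuousLinearMap.id ℂ (lp (fun _ : S => ℂ) 2)) - Q).comp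
          ((∑ s ∈ I, (πS s).comp (πf (f s))).comp W)) := by
    refine ContinuousLinearMap.ext fun η => ?_
    simp only [ContinuousLinearMap.comp_apply, ContinuousLinearMap.sum_apply, map_sum]
    refine Finset.sum_congr rfl fun s _ => ?_
    have h3 := main3 s (f s)
    have := congrFun (congrArg DFunLike.coe h3) η
    simpa only [ContinuousLinearMap.comp_apply] using this.symm
  rw [hsum]
  have hWop : ‖W‖ ≤ 1 :=
    ContinuousLinearMap.opNorm_le_bound W zero_le_one (fun η => by rw [hWiso, one_mul])
  have hWadj : ∀ ζ, ‖ContinuousLinearMap.adjoint W ζ‖ ≤ ‖ζ‖ := by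
    intro ζ
    calc ‖ContinuousLinearMap.adjoint W ζ‖ ≤ ‖ContinuousLinearMap.adjoint W‖ * ‖ζ‖ :=
          ContinuousLinearMap.le_opNorm _ _
      _ ≤ 1 * ‖ζ‖ := by
          have : ‖ContinuousLinearMap.adjoint W‖ = ‖W‖ :=
            ContinuousLinearMap.adjoint.norm_map W
          rw [this]
          exact mul_le_mul_of_nonneg_right hWop (norm_nonneg _)
      _ = ‖ζ‖ := one_mul _
  refine ContinuousLinearMap.opNorm_le_bound _ (norm_nonneg _) fun η => ?_
  simp only [ContinuousLinearMap.comp_apply]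
  calc ‖ContinuousLinearMap.adjoint W
        ((ContinuousLinearMap.id ℂ (lp (fun _ : S => ℂ) 2) - Q)
          ((∑ s ∈ I, (πS s).comp (πf (f s))) (W η)))‖
      ≤ ‖(ContinuousLinearMap.id ℂ (lp (fun _ : S => ℂ) 2) - Q)
          ((∑ s ∈ I, (πS s).comp (πf (f s))) (W η))‖ := hWadj _
    _ ≤ ‖(∑ s ∈ I, (πS s).comp (πf (f s))) (W η)‖ := by
        have := hPnorm ((∑ s ∈ I, (πS s).comp (πf (f s))) (W η))
        simpa only [ContinuousLinearMap.sub_apply, ContinuousLinearMap.id_apply] using this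
    _ ≤ ‖∑ s ∈ I, (πS s).comp (πf (f s))‖ * ‖W η‖ := ContinuousLinearMap.le_opNorm _ _
    _ = ‖∑ s ∈ I, (πS s).comp (πf (f s))‖ * ‖η‖ := by rw [hWiso]
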